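/- arXiv:1203.2427 — 2 statements merged into one kernel-verified Lean document; each statement's English description precedes it below -/
import Mathlib

section
/- For complex ζ with 0 < Re ζ < 1 and ε > 0, the integral ∫₀^∞ e^{-εs} cos(s) s^(ζ-1) ds converges, and its limit as ε → 0⁺ equals cos(πζ/2)·Γ(ζ). -/
open MeasureTheory Filter Set Complex

/-- Real comparison integrand is integrable. -/
lemma aux_real_int {s : ℝ} (hs : -1 < s) {c : ℝ} (hc : 0 < c) :
    IntegrableOn (fun t : ℝ => t ^ s * Real.exp (-(c * t))) (Set.Ioi 0) := by
  have := integrableOn_rpow_mul_exp_neg_mul_rpow hs zero_lt_one hc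
  refine this.congr_fun (fun t ht => ?_) measurableSet_Ioi
  simp only [Real.rpow_one]; ring_nf

/-- Integrability of the complex integrand. -/
lemma aux_cint {ζ : ℂ} (h0 : 0 < ζ.re) {b : ℂ} (hb : 0 < b.re) :
    IntegrableOn (fun t : ℝ => (t : ℂ) ^ (ζ - 1) * Complex.exp (-(b * t))) (Set.Ioi 0) := by
  have hcont : ContinuousOn (fun t : ℝ => (t : ℂ) ^ (ζ - 1) * Complex.exp (-(b * t)))
      (Set.Ioi 0) := by
    apply ContinuousOn.mul
    · exact ContinuousOn.cpow_const Complex.continuous_ofReal.continuousOn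
        (fun t ht => Or.inl (by simpa using ht))
    · exact (Complex.continuous_exp.comp (by fun_prop)).continuousOn
  refine Integrable.mono' (aux_real_int (s := ζ.re - 1) (by linarith) hb) (hcont.aestronglyMeasurable measurableSet_Ioi) ?_
  filter_upwards [ae_restrict_mem measurableSet_Ioi] with t ht
  rw [mem_Ioi] at ht
  rw [norm_mul, Complex.norm_exp,
    Complex.norm_cpow_eq_rpow_re_of_pos ht]
  have : (-(b * t)).re = -(b.re * t) := by simp
  rw [this, Complex.sub_re, Complex.one_re]

lemma aux_meas (ζ : ℂ) (c d : ℂ) (x : ℂ) :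
    AEStronglyMeasurable (fun t : ℝ => (t : ℂ) ^ (ζ - 1) * (c * (t:ℂ) + d) * Complex.exp (-(x * t)))
      (volume.restrict (Set.Ioi 0)) := by
  refine ContinuousOn.aestronglyMeasurable ?_ measurableSet_Ioi
  apply ContinuousOn.mul
  · apply ContinuousOn.mul
    · exact ContinuousOn.cpow_const Complex.continuous_ofReal.continuousOn
        (fun t ht => Or.inl (by simpa using ht))
    · fun_prop
  · exact (Complex.continuous_exp.comp (by fun_prop)).continuousOn

lemma aux_key {ζ : ℂ} (h0 : 0 < ζ.re) {b : ℂ} (hb : 0 < b.re) :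
    ∫ t in Set.Ioi (0:ℝ), (t:ℂ) ^ (ζ - 1) * Complex.exp (-(b * t))
      = b ^ (-ζ) * Complex.Gamma ζ := by
  set U : Set ℂ := {z : ℂ | 0 < z.re} with hU
  have hUopen : IsOpen U := isOpen_lt continuous_const Complex.continuous_re
  have hUconn : IsPreconnected U := (convex_halfSpace_re_gt 0).isPreconnected
  set F : ℂ → ℂ := fun z => ∫ t in Set.Ioi (0:ℝ), (t:ℂ) ^ (ζ - 1) * Complex.exp (-(z * t))
  set G : ℂ → ℂ := fun z => z ^ (-ζ) * Complex.Gamma ζ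
  have hFd : DifferentiableOn ℂ F U := by
    intro b₀ hb₀
    rw [hU, mem_setOf_eq] at hb₀
    set ε : ℝ := b₀.re / 2 with hε
    have hεpos : 0 < ε := half_pos hb₀
    have key := hasDerivAt_integral_of_dominated_loc_of_deriv_le (μ := volume.restrict (Set.Ioi 0))
      (F := fun (x : ℂ) (t : ℝ) => (t:ℂ) ^ (ζ - 1) * Complex.exp (-(x * t)))
      (F' := fun (x : ℂ) (t : ℝ) => (t:ℂ) ^ (ζ - 1) * (-(t:ℂ)) * Complex.exp (-(x * t)))
      (bound := fun t : ℝ => t ^ ζ.re * Real.exp (-(ε * t))) (x₀ := b₀) (Metric.ball_mem_nhds b₀ hεpos)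
      ?_ ?_ ?_ ?_ ?_ ?_
    · exact (key.2.differentiableAt).differentiableWithinAt
    · filter_upwards with x
      simpa using aux_meas ζ 0 1 x
    · exact aux_cint h0 hb₀
    · refine (aux_meas ζ (-1) 0 b₀).congr ?_
      filter_upwards with t
      ring_nf
    · filter_upwards [ae_restrict_mem measurableSet_Ioi] with t ht x hx
      rw [Set.mem_Ioi] at ht
      rw [Metric.mem_ball, Complex.dist_eq] at hx
      have hxre : ε ≤ x.re := by
        have h1 : |(x - b₀).re| ≤ ‖x - b₀‖ := Complex.abs_re_le_norm _
        have h2 : |(x - b₀).re| < ε := lt_of_le_of_lt h1 hx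
        have := abs_lt.mp h2
        simp only [Complex.sub_re] at this
        have := this.1
        linarith [hε ▸ (by linarith : b₀.re - ε = ε)]
      rw [norm_mul, norm_mul,
        Complex.norm_exp, Complex.norm_cpow_eq_rpow_re_of_pos ht]
      have hre : (-(x * (t:ℂ))).re = -(x.re * t) := by simp
      rw [hre, Complex.sub_re, Complex.one_re]
      have habs : ‖-(t:ℂ)‖ = t := by
        rw [norm_neg, Complex.norm_real, Real.norm_eq_abs, abs_of_pos ht]
      rw [habs]
      have h3 : t ^ (ζ.re - 1) * t = t ^ ζ.re := by
        rw [← Real.rpow_add_one ht.ne', sub_add_cancel]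
      calc t ^ (ζ.re - 1) * t * Real.exp (-(x.re * t))
          = t ^ ζ.re * Real.exp (-(x.re * t)) := by rw [h3]
        _ ≤ t ^ ζ.re * Real.exp (-(ε * t)) := by
            apply mul_le_mul_of_nonneg_left _ (Real.rpow_nonneg ht.le _)
            apply Real.exp_le_exp.mpr
            have : ε * t ≤ x.re * t := mul_le_mul_of_nonneg_right hxre ht.le
            linarith
    · exact aux_real_int (s := ζ.re) (by linarith) hεpos
    · filter_upwards with t x _
      have h1 : HasDerivAt (fun x : ℂ => -(x * (t:ℂ))) (-(t:ℂ)) x := by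
        have := ((hasDerivAt_id' x).mul_const (t:ℂ)).neg; rwa [one_mul] at this
      have h2 := (h1.cexp).const_mul ((t:ℂ) ^ (ζ - 1))
      refine h2.congr_deriv ?_
      ring
  have hFa : AnalyticOnNhd ℂ F U := hFd.analyticOnNhd hUopen
  have hGa : AnalyticOnNhd ℂ G U := by
    apply DifferentiableOn.analyticOnNhd _ hUopen
    intro z hz
    rw [hU, mem_setOf_eq] at hz
    exact ((differentiableAt_id.cpow (differentiableAt_const _)
      (Or.inl hz)).mul_const _).differentiableWithinAt
  have hreal : ∀ r : ℝ, 0 < r → F (r : ℂ) = G (r : ℂ) := by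
    intro r hr
    have := Complex.integral_cpow_mul_exp_neg_mul_Ioi h0 hr
    simp only [F, G]
    rw [this]
    congr 1
    rw [Complex.cpow_neg, one_div, Complex.inv_cpow]
    rw [Complex.arg_ofReal_of_nonneg hr.le]
    exact Real.pi_ne_zero.symm
  have hfreq : ∃ᶠ z in nhdsWithin (1:ℂ) {(1:ℂ)}ᶜ, F z = G z := by
    have htend : Tendsto (fun n : ℕ => ((1 + 1/(n+1) : ℝ) : ℂ)) atTop
        (nhdsWithin (1:ℂ) {(1:ℂ)}ᶜ) := by
      rw [tendsto_nhdsWithin_iff]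
      constructor
      · have : Tendsto (fun n : ℕ => (1 + 1/(n+1) : ℝ)) atTop (nhds 1) := by
          have := tendsto_one_div_add_atTop_nhds_zero_nat (𝕜 := ℝ)
          simpa using (tendsto_const_nhds (x := (1:ℝ))).add this
        have := (Complex.continuous_ofReal.tendsto 1).comp this
        simpa [Function.comp_def] using this
      · filter_upwards with n
        simp only [Set.mem_compl_iff, Set.mem_singleton_iff]
        intro h
        have : (1 + 1/(n+1) : ℝ) = 1 := by exact_mod_cast h
        have hn : (0:ℝ) < 1/(n+1) := by positivity
        linarith
    apply htend.frequently
    apply Filter.Frequently.of_forall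
    intro n
    exact hreal _ (by positivity)
  have := hFa.eqOn_of_preconnected_of_frequently_eq hGa hUconn
    (show (1:ℂ) ∈ U by simp [hU]) hfreq
  exact this hb

lemma aux_pt (ζ : ℂ) (ε s : ℝ) :
    (Real.exp (-(ε * s)) : ℂ) * Complex.cos s * (s : ℂ) ^ (ζ - 1)
      = (1/2 : ℂ) * ((s:ℂ) ^ (ζ - 1) * Complex.exp (-(((ε:ℂ) - I) * s))
          + (s:ℂ) ^ (ζ - 1) * Complex.exp (-(((ε:ℂ) + I) * s))) := by
  rw [Complex.cos, Complex.ofReal_exp]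
  push_cast
  have e1 : Complex.exp (-(↑ε * ↑s)) * Complex.exp (↑s * I)
      = Complex.exp (-(((ε:ℂ) - I) * s)) := by
    rw [← Complex.exp_add]; congr 1; ring
  have e2 : Complex.exp (-(↑ε * ↑s)) * Complex.exp (-↑s * I)
      = Complex.exp (-(((ε:ℂ) + I) * s)) := by
    rw [← Complex.exp_add]; congr 1; ring
  calc Complex.exp (-(↑ε * ↑s)) * ((Complex.exp (↑s * I) + Complex.exp (-↑s * I)) / 2)
        * (s:ℂ) ^ (ζ - 1)
      = (1/2 : ℂ) * ((s:ℂ) ^ (ζ - 1) * (Complex.exp (-(↑ε * ↑s)) * Complex.exp (↑s * I))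
          + (s:ℂ) ^ (ζ - 1) * (Complex.exp (-(↑ε * ↑s)) * Complex.exp (-↑s * I))) := by ring
    _ = _ := by rw [e1, e2]

/-- Abel regularization: for `0 < Re ζ < 1` and `ε > 0`, the integral
`∫₀^∞ e^{-εs} cos(s) s^(ζ-1) ds` converges, and as `ε → 0⁺` it tends to `cos(πζ/2) Γ(ζ)`. -/
theorem cos_power_abel_regularization (ζ : ℂ) (h0 : 0 < ζ.re) (h1 : ζ.re < 1) :
    (∀ ε : ℝ, 0 < ε → IntegrableOn
        (fun s : ℝ => (Real.exp (-(ε * s)) : ℂ) * Complex.cos s * (s : ℂ) ^ (ζ - 1))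
        (Set.Ioi 0)) ∧
    Tendsto
      (fun ε : ℝ => ∫ s in Set.Ioi (0:ℝ),
        (Real.exp (-(ε * s)) : ℂ) * Complex.cos s * (s : ℂ) ^ (ζ - 1))
      (nhdsWithin 0 (Set.Ioi 0))
      (nhds (Complex.cos (Real.pi * ζ / 2) * Complex.Gamma ζ)) := by
  have hre1 : ∀ ε : ℝ, 0 < ε → 0 < ((ε:ℂ) - I).re := fun ε hε => by simpa using hε
  have hre2 : ∀ ε : ℝ, 0 < ε → 0 < ((ε:ℂ) + I).re := fun ε hε => by simpa using hε
  have hint : ∀ ε : ℝ, 0 < ε → IntegrableOn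
      (fun s : ℝ => (Real.exp (-(ε * s)) : ℂ) * Complex.cos s * (s : ℂ) ^ (ζ - 1))
      (Set.Ioi 0) := by
    intro ε hε
    have h2 : IntegrableOn (fun s : ℝ => (1/2 : ℂ) * ((s:ℂ) ^ (ζ - 1)
        * Complex.exp (-(((ε:ℂ) - I) * s)) + (s:ℂ) ^ (ζ - 1) * Complex.exp (-(((ε:ℂ) + I) * s))))
        (Set.Ioi 0) :=
      ((aux_cint h0 (hre1 ε hε)).add (aux_cint h0 (hre2 ε hε))).const_mul (1/2 : ℂ)
    exact h2.congr_fun (fun s _ => (aux_pt ζ ε s).symm) measurableSet_Ioi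
  refine ⟨hint, ?_⟩
  have hval : ∀ ε : ℝ, 0 < ε →
      (∫ s in Set.Ioi (0:ℝ), (Real.exp (-(ε * s)) : ℂ) * Complex.cos s * (s : ℂ) ^ (ζ - 1))
        = (1/2 : ℂ) * ((((ε:ℂ) - I) ^ (-ζ) + ((ε:ℂ) + I) ^ (-ζ)) * Complex.Gamma ζ) := by
    intro ε hε
    rw [setIntegral_congr_fun measurableSet_Ioi (fun s _ => aux_pt ζ ε s)]
    rw [integral_const_mul, integral_add (aux_cint h0 (hre1 ε hε)) (aux_cint h0 (hre2 ε hε)),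
      aux_key h0 (hre1 ε hε), aux_key h0 (hre2 ε hε)]
    ring
  have hlim : Tendsto (fun ε : ℝ =>
      (1/2 : ℂ) * ((((ε:ℂ) - I) ^ (-ζ) + ((ε:ℂ) + I) ^ (-ζ)) * Complex.Gamma ζ))
      (nhdsWithin 0 (Set.Ioi 0))
      (nhds (Complex.cos (Real.pi * ζ / 2) * Complex.Gamma ζ)) := by
    have c1 : Tendsto (fun ε : ℝ => ((ε:ℂ) - I) ^ (-ζ)) (nhds 0) (nhds ((-I) ^ (-ζ))) := by
      have hbase : Tendsto (fun ε : ℝ => (ε:ℂ) - I) (nhds 0) (nhds (-I)) := by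
        have := (Complex.continuous_ofReal.tendsto 0).sub_const I
        simpa using this
      exact (continuousAt_cpow_const (Or.inr (by simp))).tendsto.comp hbase
    have c2 : Tendsto (fun ε : ℝ => ((ε:ℂ) + I) ^ (-ζ)) (nhds 0) (nhds (I ^ (-ζ))) := by
      have hbase : Tendsto (fun ε : ℝ => (ε:ℂ) + I) (nhds 0) (nhds I) := by
        have := (Complex.continuous_ofReal.tendsto 0).add_const I
        simpa using this
      exact (continuousAt_cpow_const (Or.inr (by simp))).tendsto.comp hbase
    have := ((c1.add c2).mul_const (Complex.Gamma ζ)).const_mul (1/2 : ℂ)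
    have heq : (1/2 : ℂ) * (((-I) ^ (-ζ) + I ^ (-ζ)) * Complex.Gamma ζ)
        = Complex.cos (Real.pi * ζ / 2) * Complex.Gamma ζ := by
      have e1 : (-I) ^ (-ζ) = Complex.exp ((Real.pi : ℂ) * ζ / 2 * I) := by
        rw [Complex.cpow_def_of_ne_zero (by simp), Complex.log_neg_I]
        congr 1; ring
      have e2 : I ^ (-ζ) = Complex.exp (-((Real.pi : ℂ) * ζ / 2 * I)) := by
        rw [Complex.cpow_def_of_ne_zero Complex.I_ne_zero, Complex.log_I]
        congr 1; ring
      rw [e1, e2, Complex.cos]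
      ring_nf
    rw [← heq]
    exact this.mono_left nhdsWithin_le_nhds
  refine hlim.congr' ?_
  filter_upwards [self_mem_nhdsWithin] with ε hε
  exact (hval ε hε).symm
end

section
/- For every δ with 0 < δ < 1/2 there exists a constant C(δ) < ∞ such that for all ζ in the strip δ < Re ζ < 1 - δ and all R ∈ (0,∞), |∫₀^R cos(s)·s^(ζ-1) ds| ≤ C(δ)·e^{(π/2)|Im ζ|}. -/
open MeasureTheory Filter intervalIntegral Set
open scoped Interval

lemma cospow_norm_le (ζ : ℂ) (hζ : ζ ≠ 1) (s : ℝ) (hs : 0 ≤ s) :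
    ‖Complex.cos s * (s : ℂ) ^ (ζ - 1)‖ ≤ s ^ (ζ.re - 1) := by
  rcases hs.eq_or_lt with h | h
  · subst h
    rw [Complex.ofReal_zero, Complex.zero_cpow (sub_ne_zero.mpr hζ), mul_zero, norm_zero]
    positivity
  · rw [norm_mul,
      Complex.norm_cpow_eq_rpow_re_of_pos h]
    have h1 : ‖Complex.cos s‖ ≤ 1 := by
      rw [← Complex.ofReal_cos, Complex.norm_real]
      exact Real.abs_cos_le_one s
    calc ‖Complex.cos s‖ * s ^ ((ζ - 1).re)
        ≤ 1 * s ^ ((ζ - 1).re) := by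
          apply mul_le_mul_of_nonneg_right h1 (Real.rpow_nonneg h.le _)
      _ = s ^ (ζ.re - 1) := by rw [one_mul]; norm_num

lemma cospow_integrable (ζ : ℂ) (hζ : -1 < (ζ - 1).re) (r : ℝ) (hr : 0 ≤ r) :
    IntervalIntegrable (fun s : ℝ => Complex.cos s * (s : ℂ) ^ (ζ - 1)) volume 0 r :=
  (intervalIntegrable_cpow' hζ).continuousOn_mul
    ((Complex.continuous_cos.comp Complex.continuous_ofReal).continuousOn)

lemma cospow_small (δ : ℝ) (hδ0 : 0 < δ) (ζ : ℂ) (hσ0 : δ < ζ.re) (hσ1 : ζ.re < 1)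
    (r : ℝ) (hr : 0 < r) (hr1 : r ≤ 1) :
    ‖∫ s in (0:ℝ)..r, Complex.cos s * (s : ℂ) ^ (ζ - 1)‖ ≤ 1 / δ := by
  have hζ1 : ζ ≠ 1 := by intro h; rw [h] at hσ1; simp at hσ1
  have hre : -1 < (ζ - 1).re := by simp [Complex.sub_re]; linarith
  have hσpos : 0 < ζ.re := lt_trans hδ0 hσ0
  calc ‖∫ s in (0:ℝ)..r, Complex.cos s * (s : ℂ) ^ (ζ - 1)‖
      ≤ ∫ s in (0:ℝ)..r, ‖Complex.cos s * (s : ℂ) ^ (ζ - 1)‖ :=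
        intervalIntegral.norm_integral_le_integral_norm hr.le
    _ ≤ ∫ s in (0:ℝ)..r, s ^ (ζ.re - 1) := by
        apply intervalIntegral.integral_mono_on hr.le
        · exact (cospow_integrable ζ hre r hr.le).norm
        · exact intervalIntegrable_rpow' (by linarith)
        · intro s hs
          exact cospow_norm_le ζ hζ1 s hs.1
    _ = (r ^ ζ.re - 0 ^ ζ.re) / ζ.re := by
        rw [integral_rpow (Or.inl (by linarith))]
        norm_num
    _ ≤ 1 / δ := by
        rw [Real.zero_rpow (ne_of_gt hσpos), sub_zero]
        have h1 : r ^ ζ.re ≤ 1 := Real.rpow_le_one hr.le hr1 hσpos.le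
        have h2 : 1 / ζ.re ≤ 1 / δ := by
          apply one_div_le_one_div_of_le hδ0 hσ0.le
        calc r ^ ζ.re / ζ.re ≤ 1 / ζ.re := by gcongr
          _ ≤ 1 / δ := h2

lemma cospow_large (δ : ℝ) (hδ0 : 0 < δ) (ζ : ℂ) (hσ0 : δ < ζ.re) (hσ1 : ζ.re < 1 - δ)
    (R : ℝ) (hR : 1 ≤ R) :
    ‖∫ s in (1:ℝ)..R, Complex.cos s * (s : ℂ) ^ (ζ - 1)‖ ≤ 2 + ‖ζ - 1‖ / δ := by
  have hσlt1 : ζ.re < 1 := by linarith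
  have hσpos : 0 < ζ.re := lt_trans hδ0 hσ0
  -- integration by parts
  set u : ℝ → ℂ := fun s => (s : ℂ) ^ (ζ - 1) with hu_def
  set u' : ℝ → ℂ := fun s => (ζ - 1) * (s : ℂ) ^ (ζ - 2) with hu'_def
  have huIcc : [[(1:ℝ), R]] = Icc 1 R := uIcc_of_le hR
  have hpos : ∀ x ∈ [[(1:ℝ), R]], (0:ℝ) < x := by
    intro x hx; rw [huIcc] at hx; linarith [hx.1]
  have hu : ∀ x ∈ [[(1:ℝ), R]], HasDerivAt u (u' x) x := by
    intro x hx
    have hx0 : (0:ℝ) < x := hpos x hx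
    have hslit : ((x : ℂ)) ∈ Complex.slitPlane := by
      rw [Complex.mem_slitPlane_iff]; left; simpa using hx0
    have := ((Complex.hasStrictDerivAt_cpow_const (c := ζ - 1)
      hslit).hasDerivAt).comp_ofReal
    convert this using 2
    ring_nf
  have hv : ∀ x ∈ [[(1:ℝ), R]], HasDerivAt (fun s : ℝ => Complex.sin s)
      (Complex.cos x) x := fun x _ => (Complex.hasDerivAt_sin x).comp_ofReal
  have hu'cont : ContinuousOn u' [[(1:ℝ), R]] := by
    apply ContinuousOn.mul continuousOn_const
    apply Complex.continuous_ofReal.continuousOn.cpow_const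
    intro x hx
    rw [Complex.mem_slitPlane_iff]; left; simpa using hpos x hx
  have hu'int : IntervalIntegrable u' volume 1 R := hu'cont.intervalIntegrable
  have hv'int : IntervalIntegrable (fun s : ℝ => Complex.cos s) volume 1 R :=
    ((Complex.continuous_cos.comp Complex.continuous_ofReal)).continuousOn.intervalIntegrable
  have hibp := intervalIntegral.integral_mul_deriv_eq_deriv_mul hu hv hu'int hv'int
  have hflip : (∫ s in (1:ℝ)..R, Complex.cos s * (s:ℂ) ^ (ζ - 1))
      = ∫ s in (1:ℝ)..R, u s * Complex.cos s := by
    apply intervalIntegral.integral_congr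
    intro s _; simp [hu_def, mul_comm]
  rw [hflip, hibp]
  -- bound the three pieces
  have hsin : ∀ s : ℝ, ‖Complex.sin s‖ ≤ 1 := by
    intro s
    rw [← Complex.ofReal_sin, Complex.norm_real]
    exact Real.abs_sin_le_one s
  have hunorm : ∀ s : ℝ, 0 < s → ‖u s‖ = s ^ (ζ.re - 1) := by
    intro s hs
    rw [hu_def]
    simp only [Complex.norm_cpow_eq_rpow_re_of_pos hs]
    norm_num
  have huR : ‖u R‖ ≤ 1 := by
    rw [hunorm R (by linarith)]
    exact Real.rpow_le_one_of_one_le_of_nonpos hR (by linarith)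
  have hu1 : ‖u 1‖ ≤ 1 := by
    rw [hunorm 1 one_pos, Real.one_rpow]
  -- bound the remaining integral
  have hint2 : ‖∫ s in (1:ℝ)..R, u' s * Complex.sin s‖ ≤ ‖ζ - 1‖ / δ := by
    have hnormle : ∀ s ∈ Icc (1:ℝ) R, ‖u' s * Complex.sin s‖ ≤ ‖ζ - 1‖ * s ^ (ζ.re - 2) := by
      intro s hs
      have hs0 : (0:ℝ) < s := by linarith [hs.1]
      rw [norm_mul, hu'_def]
      simp only [norm_mul]
      calc ‖ζ - 1‖ * ‖(s:ℂ) ^ (ζ - 2)‖ * ‖Complex.sin s‖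
          ≤ ‖ζ - 1‖ * ‖(s:ℂ) ^ (ζ - 2)‖ * 1 := by
            apply mul_le_mul_of_nonneg_left (hsin s) (by positivity)
        _ = ‖ζ - 1‖ * s ^ (ζ.re - 2) := by
            rw [mul_one]
            congr 1
            rw [Complex.norm_cpow_eq_rpow_re_of_pos hs0,
              Complex.sub_re]
            norm_num
    calc ‖∫ s in (1:ℝ)..R, u' s * Complex.sin s‖
        ≤ ∫ s in (1:ℝ)..R, ‖u' s * Complex.sin s‖ :=
          intervalIntegral.norm_integral_le_integral_norm hR
      _ ≤ ∫ s in (1:ℝ)..R, ‖ζ - 1‖ * s ^ (ζ.re - 2) := by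
          apply intervalIntegral.integral_mono_on hR
          · exact (hu'int.mul_continuousOn
              ((Complex.continuous_sin.comp Complex.continuous_ofReal).continuousOn)).norm
          · apply IntervalIntegrable.const_mul
            apply intervalIntegrable_rpow
            right
            rw [huIcc]; intro h; linarith [h.1]
          · exact hnormle
      _ = ‖ζ - 1‖ * ∫ s in (1:ℝ)..R, s ^ (ζ.re - 2) := by
          rw [← intervalIntegral.integral_const_mul]
      _ ≤ ‖ζ - 1‖ * (1 / δ) := by
          apply mul_le_mul_of_nonneg_left _ (norm_nonneg _)
          rw [integral_rpow (Or.inr ⟨by intro h; linarith,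
            by rw [huIcc]; intro h; linarith [h.1]⟩)]
          have he : ζ.re - 2 + 1 = ζ.re - 1 := by ring
          rw [he]
          have hR1 : R ^ (ζ.re - 1) ≤ 1 :=
            Real.rpow_le_one_of_one_le_of_nonpos hR (by linarith)
          have hR0 : 0 ≤ R ^ (ζ.re - 1) := Real.rpow_nonneg (by linarith) _
          rw [Real.one_rpow]
          have hden : ζ.re - 1 < 0 := by linarith
          rw [div_le_iff_of_neg hden]
          have h1δ : (0:ℝ) ≤ 1/δ := by positivity
          have hkey := mul_le_mul_of_nonneg_left (show ζ.re - 1 ≤ -δ by linarith) h1δ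
          have hc : (1/δ) * (-δ) = -1 := by field_simp
          nlinarith
      _ = ‖ζ - 1‖ / δ := by ring
  calc ‖u R * Complex.sin R - u 1 * Complex.sin 1 - ∫ s in (1:ℝ)..R, u' s * Complex.sin s‖
      ≤ ‖u R * Complex.sin R - u 1 * Complex.sin 1‖ + ‖∫ s in (1:ℝ)..R, u' s * Complex.sin s‖ :=
        norm_sub_le _ _
    _ ≤ (‖u R * Complex.sin R‖ + ‖u 1 * Complex.sin 1‖) + ‖ζ - 1‖ / δ := by
        gcongr; exact norm_sub_le _ _
    _ ≤ (1 * 1 + 1 * 1) + ‖ζ - 1‖ / δ := by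
        gcongr
        · rw [norm_mul]
          exact mul_le_mul huR (hsin R) (norm_nonneg _) zero_le_one
        · rw [norm_mul]
          exact mul_le_mul hu1 (hsin 1) (norm_nonneg _) zero_le_one
    _ = 2 + ‖ζ - 1‖ / δ := by norm_num

/-- Uniform bound on partial cosine-Mellin integrals in the strip `δ < Re ζ < 1 - δ`. -/
theorem cos_power_partial_integral_bound (δ : ℝ) (hδ0 : 0 < δ) (hδ1 : δ < 1/2) :
    ∃ C : ℝ, ∀ (ζ : ℂ) (R : ℝ), δ < ζ.re → ζ.re < 1 - δ → 0 < R →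
      ‖∫ s in (0:ℝ)..R, Complex.cos s * (s : ℂ) ^ (ζ - 1)‖
        ≤ C * Real.exp (Real.pi / 2 * |ζ.im|) := by
  refine ⟨3 + 2 / δ, fun ζ R hσ0 hσ1 hR => ?_⟩
  have hσlt1 : ζ.re < 1 := by linarith
  have hre : -1 < (ζ - 1).re := by simp [Complex.sub_re]; linarith
  set E := Real.exp (Real.pi / 2 * |ζ.im|) with hE
  have hE1 : 1 ≤ E := Real.one_le_exp (by positivity)
  have habs : ‖ζ - 1‖ ≤ 1 + |ζ.im| := by
    calc ‖ζ - 1‖ ≤ |(ζ - 1).re| + |(ζ - 1).im| := Complex.norm_le_abs_re_add_abs_im _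
      _ ≤ 1 + |ζ.im| := by
          simp only [Complex.sub_re, Complex.sub_im, Complex.one_re, Complex.one_im, sub_zero]
          have h1 : |ζ.re - 1| ≤ 1 := by
            rw [abs_le]; constructor <;> [linarith [lt_trans hδ0 hσ0]; linarith]
          linarith
  have hexp : 1 + |ζ.im| ≤ E := by
    calc 1 + |ζ.im| ≤ Real.exp |ζ.im| := Real.add_one_le_exp _ |>.trans_eq' (by ring)
      _ ≤ E := by
          apply Real.exp_le_exp.mpr
          nlinarith [abs_nonneg ζ.im, Real.pi_gt_three]
  have hζnorm : ‖ζ - 1‖ ≤ E := le_trans habs hexp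
  rcases le_or_gt R 1 with hR1 | hR1
  · -- R ≤ 1
    have h := cospow_small δ hδ0 ζ hσ0 hσlt1 R hR hR1
    calc ‖∫ s in (0:ℝ)..R, Complex.cos s * (s : ℂ) ^ (ζ - 1)‖ ≤ 1 / δ := h
      _ ≤ (3 + 2 / δ) * 1 := by
          rw [mul_one]
          have : 0 < 1 / δ := by positivity
          have h2 : 1 / δ ≤ 2 / δ := by gcongr <;> norm_num
          linarith
      _ ≤ (3 + 2 / δ) * E := by
          apply mul_le_mul_of_nonneg_left hE1 (by positivity)
  · -- R > 1
    have hsplit : (∫ s in (0:ℝ)..R, Complex.cos s * (s : ℂ) ^ (ζ - 1))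
        = (∫ s in (0:ℝ)..1, Complex.cos s * (s : ℂ) ^ (ζ - 1))
          + ∫ s in (1:ℝ)..R, Complex.cos s * (s : ℂ) ^ (ζ - 1) := by
      rw [intervalIntegral.integral_add_adjacent_intervals
        (cospow_integrable ζ hre 1 zero_le_one)]
      apply ((cospow_integrable ζ hre R (by linarith)).mono_set _)
      rw [uIcc_of_le (by linarith : (1:ℝ) ≤ R), uIcc_of_le (by linarith : (0:ℝ) ≤ R)]
      exact Icc_subset_Icc (by norm_num) le_rfl
    rw [hsplit]
    have h1 := cospow_small δ hδ0 ζ hσ0 hσlt1 1 one_pos le_rfl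
    have h2 := cospow_large δ hδ0 ζ hσ0 hσ1 R hR1.le
    calc ‖(∫ s in (0:ℝ)..1, Complex.cos s * (s : ℂ) ^ (ζ - 1))
          + ∫ s in (1:ℝ)..R, Complex.cos s * (s : ℂ) ^ (ζ - 1)‖
        ≤ ‖∫ s in (0:ℝ)..1, Complex.cos s * (s : ℂ) ^ (ζ - 1)‖
          + ‖∫ s in (1:ℝ)..R, Complex.cos s * (s : ℂ) ^ (ζ - 1)‖ := norm_add_le _ _
      _ ≤ 1 / δ + (2 + ‖ζ - 1‖ / δ) := add_le_add h1 h2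
      _ ≤ 1 / δ + (2 + E / δ) := by
          gcongr
      _ ≤ (3 + 2 / δ) * E := by
          have hδinv : 0 < 1 / δ := by positivity
          have : 1 / δ + (2 + E / δ) = (1 / δ + 2) + E / δ := by ring
          rw [this]
          have hA : 1 / δ + 2 ≤ (2 + 1 / δ) * E := by
            nlinarith
          have hB : E / δ ≤ (1 / δ) * E := by rw [div_eq_mul_inv, one_div]; ring_nf; rfl
          have : (2 + 1/δ) * E + (1/δ) * E = (2 + 2/δ) * E := by ring
          nlinarith [mul_le_mul_of_nonneg_left hE1 (le_of_lt (by positivity : (0:ℝ) < 1/δ))]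
end
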